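/- Let u_h solve the discrete Hamilton–Jacobi equation with initial datum f : Ω_h → ℝ, let x_l ∈ Ω_h and t > 0. Then for every admissible control pair (v, p) one has the lower bound u_h(x_l, t) ≥ Σ_{x ∈ Ω_h} f(x)·p(t, x) − ∫₀ᵗ Σ_{x ∈ Ω_h} L_h(x, v(s, ·, ·))·p(s, x) ds. -/

import Mathlib

open scoped Classical BigOperators
open MeasureTheory

noncomputable section

/-- Shift a grid point `x` by the integer vector `ν` scaled by `h`. -/
def shiftPt {N : ℕ} (h : ℝ) (x : Fin N → ℝ) (ν : Fin N → ℤ) : Fin N → ℝ :=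
  fun k => x k + (ν k : ℝ) * h

/-- The state-constrained discrete Hamiltonian `H_h`. -/
def discHam {N M : ℕ} (h : ℝ) (Ωh : Finset (Fin N → ℝ)) (ν : Fin M → Fin N → ℤ)
    (Φp Φm : Fin M → (Fin N → ℝ) → ℝ) (u : (Fin N → ℝ) → ℝ) (x : Fin N → ℝ) : ℝ :=
  ∑ j : Fin M,
    ((if shiftPt h x (ν j) ∈ Ωh then
        Φp j x * (Real.exp ((u (shiftPt h x (ν j)) - u x) / h) - 1) else 0)
      + (if shiftPt h x (-(ν j)) ∈ Ωh then
        Φm j x * (Real.exp ((u (shiftPt h x (-(ν j))) - u x) / h) - 1) else 0))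

/-- `u` is a global classical solution on `[0,∞)` of the state-constrained
discrete Hamilton–Jacobi equation `∂ₜ u = H_h u` on `Ω_h` with initial datum `u0`:
for every grid point, the time slice is continuously differentiable on `[0,∞)`
(the derivative `H_h u(·,t)` depends continuously on `t`) and the equation holds. -/
def solvesDHJ {N M : ℕ} (h : ℝ) (Ωh : Finset (Fin N → ℝ)) (ν : Fin M → Fin N → ℤ)
    (Φp Φm : Fin M → (Fin N → ℝ) → ℝ)
    (u0 : (Fin N → ℝ) → ℝ) (u : (Fin N → ℝ) → ℝ → ℝ) : Prop :=
  (∀ x ∈ Ωh, u x 0 = u0 x) ∧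
  (∀ x ∈ Ωh, ∀ t ∈ Set.Ici (0:ℝ),
    HasDerivWithinAt (fun s => u x s)
      (discHam h Ωh ν Φp Φm (fun y => u y t) x) (Set.Ici 0) t) ∧
  (∀ x ∈ Ωh,
    ContinuousOn (fun t => discHam h Ωh ν Φp Φm (fun y => u y t) x) (Set.Ici 0))

/-- Off-diagonal transition kernel: `Φ(x,y) = Φⱼ⁺(x)` if `y = x + νⱼ·h`,
`Φⱼ⁻(x)` if `y = x − νⱼ·h`, and `0` otherwise (assuming the signed reaction
vectors are pairwise distinct). -/
def kerOff {N M : ℕ} (h : ℝ) (ν : Fin M → Fin N → ℤ)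
    (Φp Φm : Fin M → (Fin N → ℝ) → ℝ) (x y : Fin N → ℝ) : ℝ :=
  ∑ j : Fin M,
    ((if y = shiftPt h x (ν j) then Φp j x else 0)
      + (if y = shiftPt h x (-(ν j)) then Φm j x else 0))

/-- The kernel `Φ : Ω_h × Ω_h → ℝ`, with the diagonal
`Φ(x,x) = −Σ_{y ∈ Ω_h, y ≠ x} Φ(x,y)`. -/
def kernel {N M : ℕ} (h : ℝ) (Ωh : Finset (Fin N → ℝ)) (ν : Fin M → Fin N → ℤ)
    (Φp Φm : Fin M → (Fin N → ℝ) → ℝ) (x y : Fin N → ℝ) : ℝ :=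
  if y = x then -∑ z ∈ Ωh.erase x, kerOff h ν Φp Φm x z
  else kerOff h ν Φp Φm x y

/-- The discrete Lagrangian
`L_h(x,w) = Σ_{y ∈ Ω_h ∩ {x ± νⱼ·h}} Φ(x,y)·(w(x,y)·log w(x,y) − w(x,y) + 1)`
(the convention `0·log 0 = 0` holds since `Real.log 0 = 0`). -/
def discLag {N M : ℕ} (h : ℝ) (Ωh : Finset (Fin N → ℝ)) (ν : Fin M → Fin N → ℤ)
    (Φp Φm : Fin M → (Fin N → ℝ) → ℝ) (x : Fin N → ℝ)
    (w : (Fin N → ℝ) → (Fin N → ℝ) → ℝ) : ℝ :=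
  ∑ j : Fin M,
    ((if shiftPt h x (ν j) ∈ Ωh then
        kernel h Ωh ν Φp Φm x (shiftPt h x (ν j)) *
          (w x (shiftPt h x (ν j)) * Real.log (w x (shiftPt h x (ν j)))
            - w x (shiftPt h x (ν j)) + 1) else 0)
      + (if shiftPt h x (-(ν j)) ∈ Ωh then
        kernel h Ωh ν Φp Φm x (shiftPt h x (-(ν j))) *
          (w x (shiftPt h x (-(ν j))) * Real.log (w x (shiftPt h x (-(ν j))))
            - w x (shiftPt h x (-(ν j))) + 1) else 0))

/-- An admissible control pair `(v, p)` for the optimal-control representation of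
the solution of the discrete HJE, started from `x_l` on the time horizon `[0,t]`. -/
def Admissible {N M : ℕ} (h : ℝ) (Ωh : Finset (Fin N → ℝ)) (ν : Fin M → Fin N → ℤ)
    (Φp Φm : Fin M → (Fin N → ℝ) → ℝ) (xl : Fin N → ℝ) (t : ℝ)
    (v : ℝ → (Fin N → ℝ) → (Fin N → ℝ) → ℝ) (p : ℝ → (Fin N → ℝ) → ℝ) : Prop :=
  (∀ x y : Fin N → ℝ, ContinuousOn (fun s => v s x y) (Set.Icc 0 t)) ∧
  (∀ x : Fin N → ℝ, p 0 x = if x = xl then 1 else 0) ∧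
  (∀ s ∈ Set.Icc (0:ℝ) t, ∀ x : Fin N → ℝ, 0 ≤ p s x) ∧
  (∀ s ∈ Set.Icc (0:ℝ) t, ∀ x y : Fin N → ℝ, y ≠ x → 0 ≤ v s x y) ∧
  (∀ s ∈ Set.Icc (0:ℝ) t, ∀ x ∈ Ωh,
    ∑ y ∈ Ωh, v s x y * kernel h Ωh ν Φp Φm x y = 0) ∧
  (∀ x ∈ Ωh, ∀ s ∈ Set.Icc (0:ℝ) t,
    HasDerivWithinAt (fun τ => p τ x)
      ((1 / h) * ∑ y ∈ Ωh,
        (v s y x * kernel h Ωh ν Φp Φm y x * p s y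
          - v s x y * kernel h Ωh ν Φp Φm x y * p s x))
      (Set.Icc 0 t) s)

lemma shiftPt_eq_iff {N : ℕ} {h : ℝ} (hh : h ≠ 0) (x : Fin N → ℝ) (μ ρ : Fin N → ℤ) :
    shiftPt h x μ = shiftPt h x ρ ↔ μ = ρ := by
  constructor
  · intro hEq
    funext k
    have hk := congrFun hEq k
    simp only [shiftPt] at hk
    have : (μ k : ℝ) = (ρ k : ℝ) := by
      have h2 : (μ k : ℝ) * h = (ρ k : ℝ) * h := by linarith
      exact mul_right_cancel₀ hh h2
    exact_mod_cast this
  · rintro rfl; rfl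

lemma shiftPt_zero {N : ℕ} (h : ℝ) (x : Fin N → ℝ) : shiftPt h x 0 = x := by
  funext k; simp [shiftPt]

lemma shiftPt_ne {N : ℕ} {h : ℝ} (hh : h ≠ 0) (x : Fin N → ℝ) {μ : Fin N → ℤ}
    (hμ : μ ≠ 0) : shiftPt h x μ ≠ x := by
  intro hEq
  apply hμ
  have : shiftPt h x μ = shiftPt h x 0 := by rw [shiftPt_zero]; exact hEq
  exact (shiftPt_eq_iff hh x μ 0).1 this

lemma entropy_ineq (w a : ℝ) (hw : 0 ≤ w) :
    w * a ≤ (Real.exp a - 1) + (w * Real.log w - w + 1) := by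
  rcases eq_or_lt_of_le hw with h0 | h0
  · simp only [← h0, zero_mul, Real.log_zero, mul_zero]
    have := Real.exp_pos a
    linarith
  · have hb := Real.add_one_le_exp (a - Real.log w)
    have he : Real.exp (a - Real.log w) = Real.exp a / w := by
      rw [Real.exp_sub, Real.exp_log h0]
    rw [he] at hb
    have h2 : w * (a - Real.log w + 1) ≤ w * (Real.exp a / w) :=
      mul_le_mul_of_nonneg_left hb hw
    rw [mul_div_cancel₀ _ (ne_of_gt h0)] at h2
    nlinarith

lemma kerOff_nonneg {N M : ℕ} (h : ℝ) (ν : Fin M → Fin N → ℤ)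
    (Φp Φm : Fin M → (Fin N → ℝ) → ℝ) (x y : Fin N → ℝ)
    (hp : ∀ j, 0 ≤ Φp j x) (hm : ∀ j, 0 ≤ Φm j x) :
    0 ≤ kerOff h ν Φp Φm x y := by
  apply Finset.sum_nonneg
  intro j _
  have h1 : (0:ℝ) ≤ if y = shiftPt h x (ν j) then Φp j x else 0 := by
    split
    · exact hp j
    · exact le_refl 0
  have h2 : (0:ℝ) ≤ if y = shiftPt h x (-(ν j)) then Φm j x else 0 := by
    split
    · exact hm j
    · exact le_refl 0
  linarith

lemma sum_erase_kerOff {N M : ℕ} {h : ℝ} (hh : h ≠ 0) (Ωh : Finset (Fin N → ℝ))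
    (ν : Fin M → Fin N → ℤ) (Φp Φm : Fin M → (Fin N → ℝ) → ℝ)
    (hν0 : ∀ j, ν j ≠ 0) (x : Fin N → ℝ) (g : (Fin N → ℝ) → ℝ) :
    ∑ y ∈ Ωh.erase x, kerOff h ν Φp Φm x y * g y
      = ∑ j : Fin M,
          ((if shiftPt h x (ν j) ∈ Ωh then Φp j x * g (shiftPt h x (ν j)) else 0)
            + (if shiftPt h x (-(ν j)) ∈ Ωh then
                Φm j x * g (shiftPt h x (-(ν j))) else 0)) := by
  unfold kerOff
  simp only [Finset.sum_mul, add_mul, ite_mul, zero_mul]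
  rw [Finset.sum_comm]
  refine Finset.sum_congr rfl fun j _ => ?_
  rw [Finset.sum_add_distrib, Finset.sum_ite_eq', Finset.sum_ite_eq']
  have h1 : shiftPt h x (ν j) ≠ x := shiftPt_ne hh x (hν0 j)
  have h2 : shiftPt h x (-(ν j)) ≠ x := shiftPt_ne hh x (by simpa using hν0 j)
  simp [Finset.mem_erase, h1, h2]

section Match

variable {N M : ℕ} {h : ℝ} {ν : Fin M → Fin N → ℤ}
  {Φp Φm : Fin M → (Fin N → ℝ) → ℝ}

lemma kerOff_shift_pos (hh : h ≠ 0)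
    (hsep : Function.Injective
      (Sum.elim ν (fun j => -(ν j)) : Fin M ⊕ Fin M → Fin N → ℤ))
    (x : Fin N → ℝ) (j : Fin M) :
    kerOff h ν Φp Φm x (shiftPt h x (ν j)) = Φp j x := by
  unfold kerOff
  rw [Finset.sum_eq_single j]
  · have h1 : shiftPt h x (ν j) = shiftPt h x (ν j) := rfl
    have h2 : shiftPt h x (ν j) ≠ shiftPt h x (-(ν j)) := by
      rw [Ne, shiftPt_eq_iff hh]
      intro hEq
      have := hsep (a₁ := Sum.inl j) (a₂ := Sum.inr j) (by simpa using hEq)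
      simp at this
    simp [h2]
  · intro k _ hkj
    have h1 : shiftPt h x (ν j) ≠ shiftPt h x (ν k) := by
      rw [Ne, shiftPt_eq_iff hh]
      intro hEq
      have hinl : (Sum.inl j : Fin M ⊕ Fin M) = Sum.inl k :=
        hsep (a₁ := Sum.inl j) (a₂ := Sum.inl k) (by simpa using hEq)
      exact hkj (Sum.inl_injective hinl).symm
    have h2 : shiftPt h x (ν j) ≠ shiftPt h x (-(ν k)) := by
      rw [Ne, shiftPt_eq_iff hh]
      intro hEq
      have := hsep (a₁ := Sum.inl j) (a₂ := Sum.inr k) (by simpa using hEq)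
      simp at this
    simp [h1, h2]
  · simp

lemma kerOff_shift_neg (hh : h ≠ 0)
    (hsep : Function.Injective
      (Sum.elim ν (fun j => -(ν j)) : Fin M ⊕ Fin M → Fin N → ℤ))
    (x : Fin N → ℝ) (j : Fin M) :
    kerOff h ν Φp Φm x (shiftPt h x (-(ν j))) = Φm j x := by
  unfold kerOff
  rw [Finset.sum_eq_single j]
  · have h2 : shiftPt h x (-(ν j)) ≠ shiftPt h x (ν j) := by
      rw [Ne, shiftPt_eq_iff hh]
      intro hEq
      have := hsep (a₁ := Sum.inr j) (a₂ := Sum.inl j) (by simpa using hEq)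
      simp at this
    simp [h2]
  · intro k _ hkj
    have h1 : shiftPt h x (-(ν j)) ≠ shiftPt h x (ν k) := by
      rw [Ne, shiftPt_eq_iff hh]
      intro hEq
      have := hsep (a₁ := Sum.inr j) (a₂ := Sum.inl k) (by simpa using hEq)
      simp at this
    have h2 : shiftPt h x (-(ν j)) ≠ shiftPt h x (-(ν k)) := by
      rw [Ne, shiftPt_eq_iff hh]
      intro hEq
      have hEq' : ν j = ν k := by
        have := neg_injective hEq; exact this
      have hinr : (Sum.inr j : Fin M ⊕ Fin M) = Sum.inr k :=
        hsep (a₁ := Sum.inr j) (a₂ := Sum.inr k) (by simpa using hEq')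
      exact hkj (Sum.inr_injective hinr).symm
    simp [h1, h2]
  · simp

lemma discHam_eq (hh : h ≠ 0) (Ωh : Finset (Fin N → ℝ)) (hν0 : ∀ j, ν j ≠ 0)
    (U : (Fin N → ℝ) → ℝ) (x : Fin N → ℝ) :
    discHam h Ωh ν Φp Φm U x
      = ∑ y ∈ Ωh.erase x, kerOff h ν Φp Φm x y * (Real.exp ((U y - U x) / h) - 1) := by
  rw [sum_erase_kerOff hh Ωh ν Φp Φm hν0 x (fun y => Real.exp ((U y - U x) / h) - 1)]
  rfl

lemma discLag_eq (hh : h ≠ 0) (Ωh : Finset (Fin N → ℝ))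
    (hsep : Function.Injective
      (Sum.elim ν (fun j => -(ν j)) : Fin M ⊕ Fin M → Fin N → ℤ))
    (hν0 : ∀ j, ν j ≠ 0)
    (x : Fin N → ℝ) (w : (Fin N → ℝ) → (Fin N → ℝ) → ℝ) :
    discLag h Ωh ν Φp Φm x w
      = ∑ y ∈ Ωh.erase x, kerOff h ν Φp Φm x y *
          (w x y * Real.log (w x y) - w x y + 1) := by
  rw [sum_erase_kerOff hh Ωh ν Φp Φm hν0 x
    (fun y => w x y * Real.log (w x y) - w x y + 1)]
  unfold discLag
  refine Finset.sum_congr rfl fun j _ => ?_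
  have k1 : kernel h Ωh ν Φp Φm x (shiftPt h x (ν j)) = Φp j x := by
    rw [kernel, if_neg (shiftPt_ne hh x (hν0 j)), kerOff_shift_pos hh hsep]
  have k2 : kernel h Ωh ν Φp Φm x (shiftPt h x (-(ν j))) = Φm j x := by
    rw [kernel, if_neg (shiftPt_ne hh x (by simpa using hν0 j)), kerOff_shift_neg hh hsep]
  rw [k1, k2]

lemma key_ineq (hh : h ≠ 0) (Ωh : Finset (Fin N → ℝ))
    (hsep : Function.Injective
      (Sum.elim ν (fun j => -(ν j)) : Fin M ⊕ Fin M → Fin N → ℤ))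
    (hν0 : ∀ j, ν j ≠ 0)
    (x : Fin N → ℝ) (hx : x ∈ Ωh)
    (hp : ∀ j, 0 ≤ Φp j x) (hm : ∀ j, 0 ≤ Φm j x)
    (w : (Fin N → ℝ) → (Fin N → ℝ) → ℝ) (hw : ∀ y, y ≠ x → 0 ≤ w x y)
    (U : (Fin N → ℝ) → ℝ) :
    ∑ y ∈ Ωh, w x y * kernel h Ωh ν Φp Φm x y * ((U y - U x) / h)
      ≤ discHam h Ωh ν Φp Φm U x + discLag h Ωh ν Φp Φm x w := by
  rw [discHam_eq hh Ωh hν0 U x, discLag_eq hh Ωh hsep hν0 x w,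
    ← Finset.sum_add_distrib, ← Finset.sum_erase_add Ωh _ hx]
  have hd : w x x * kernel h Ωh ν Φp Φm x x * ((U x - U x) / h) = 0 := by
    simp
  rw [hd, add_zero]
  refine Finset.sum_le_sum fun y hy => ?_
  have hyx : y ≠ x := (Finset.mem_erase.1 hy).1
  have hk : kernel h Ωh ν Φp Φm x y = kerOff h ν Φp Φm x y := if_neg hyx
  rw [hk]
  have hk0 : 0 ≤ kerOff h ν Φp Φm x y := kerOff_nonneg h ν Φp Φm x y hp hm
  have hent := entropy_ineq (w x y) ((U y - U x) / h) (hw y hyx)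
  nlinarith [mul_le_mul_of_nonneg_left hent hk0]

end Match

/-- **Lower bound in the variational representation**: the solution of the
discrete HJE dominates the payoff of every admissible control pair. -/
theorem discrete_HJE_variational_lower_bound
    {N M : ℕ} (hN : 0 < N) (hM : 0 < M)
    (h : ℝ) (hh : 0 < h)
    (Ω : Set (Fin N → ℝ)) (hΩo : IsOpen Ω) (hΩne : Ω.Nonempty)
    (hΩbd : Bornology.IsBounded Ω)
    (hΩpos : closure Ω ⊆ {x : Fin N → ℝ | ∀ k, 0 < x k})
    (ν : Fin M → Fin N → ℤ)
    (Φp Φm : Fin M → (Fin N → ℝ) → ℝ)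
    (hΦpc : ∀ j, ContinuousOn (Φp j) (closure Ω))
    (hΦmc : ∀ j, ContinuousOn (Φm j) (closure Ω))
    (hΦp0 : ∀ j, ∀ x ∈ closure Ω, 0 ≤ Φp j x)
    (hΦm0 : ∀ j, ∀ x ∈ closure Ω, 0 ≤ Φm j x)
    (Ωh : Finset (Fin N → ℝ))
    (hΩh : ∀ x : Fin N → ℝ,
      x ∈ Ωh ↔ ((∃ i : Fin N → ℕ, ∀ k, x k = (i k : ℝ) * h) ∧ x ∈ closure Ω))
    (hne : Ωh.Nonempty)
    (hsep : Function.Injective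
      (Sum.elim ν (fun j => -(ν j)) : Fin M ⊕ Fin M → Fin N → ℤ))
    (hν0 : ∀ j, ν j ≠ 0)
    (f : (Fin N → ℝ) → ℝ) (u : (Fin N → ℝ) → ℝ → ℝ)
    (hu : solvesDHJ h Ωh ν Φp Φm f u)
    (xl : Fin N → ℝ) (hxl : xl ∈ Ωh) (t : ℝ) (ht : 0 < t)
    (v : ℝ → (Fin N → ℝ) → (Fin N → ℝ) → ℝ) (p : ℝ → (Fin N → ℝ) → ℝ)
    (hvp : Admissible h Ωh ν Φp Φm xl t v p) :
    (∑ x ∈ Ωh, f x * p t x)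
        - ∫ s in (0:ℝ)..t, ∑ x ∈ Ωh, discLag h Ωh ν Φp Φm x (v s) * p s x
      ≤ u xl t := by
  classical
  obtain ⟨hu0, huD, -⟩ := hu
  obtain ⟨hvC, hp0, hpn, hvn, -, hpD⟩ := hvp
  have hhne : h ≠ 0 := ne_of_gt hh
  have hgrid : ∀ x ∈ Ωh, x ∈ closure Ω := fun x hx => ((hΩh x).1 hx).2
  have hΦp' : ∀ x ∈ Ωh, ∀ j, 0 ≤ Φp j x := fun x hx j => hΦp0 j x (hgrid x hx)
  have hΦm' : ∀ x ∈ Ωh, ∀ j, 0 ≤ Φm j x := fun x hx j => hΦm0 j x (hgrid x hx)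
  set ℓ : ℝ → ℝ := fun s => ∑ x ∈ Ωh, discLag h Ωh ν Φp Φm x (v s) * p s x with hℓdef
  set F : ℝ → ℝ := fun s => ∑ x ∈ Ωh, u x (t - s) * p s x with hFdef
  set G : ℝ → ℝ := fun s => F s - ∫ τ in (0:ℝ)..s, ℓ τ with hGdef
  -- continuity facts
  have cu : ∀ x ∈ Ωh, ContinuousOn (fun s => u x (t - s)) (Set.Icc 0 t) := by
    intro x hx
    have c1 : ContinuousOn (fun τ => u x τ) (Set.Ici (0:ℝ)) :=
      fun τ hτ => (huD x hx τ hτ).continuousWithinAt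
    have c2 : ContinuousOn (fun s : ℝ => t - s) (Set.Icc 0 t) :=
      (continuous_const.sub continuous_id).continuousOn
    exact c1.comp c2 fun s hs => Set.mem_Ici.2 (sub_nonneg.2 hs.2)
  have cp : ∀ x ∈ Ωh, ContinuousOn (fun s => p s x) (Set.Icc 0 t) :=
    fun x hx s hs => (hpD x hx s hs).continuousWithinAt
  have cF : ContinuousOn F (Set.Icc 0 t) :=
    continuousOn_finset_sum _ fun x hx => (cu x hx).mul (cp x hx)
  have cent : ∀ a b : Fin N → ℝ, ContinuousOn
      (fun s => v s a b * Real.log (v s a b) - v s a b + 1) (Set.Icc 0 t) := by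
    intro a b
    have h1 := hvC a b
    exact ((Real.continuous_mul_log.comp_continuousOn h1).sub h1).add continuousOn_const
  have cL : ∀ x ∈ Ωh, ContinuousOn (fun s => discLag h Ωh ν Φp Φm x (v s))
      (Set.Icc 0 t) := by
    intro x _
    unfold discLag
    apply continuousOn_finset_sum
    intro j _
    apply ContinuousOn.add
    · by_cases hc : shiftPt h x (ν j) ∈ Ωh
      · simp only [if_pos hc]
        exact continuousOn_const.mul (cent x _)
      · simp only [if_neg hc]; exact continuousOn_const
    · by_cases hc : shiftPt h x (-(ν j)) ∈ Ωh
      · simp only [if_pos hc]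
        exact continuousOn_const.mul (cent x _)
      · simp only [if_neg hc]; exact continuousOn_const
  have cℓ : ContinuousOn ℓ (Set.Icc 0 t) :=
    continuousOn_finset_sum _ fun x hx => (cL x hx).mul (cp x hx)
  have hInt : IntegrableOn ℓ (Set.Icc 0 t) := cℓ.integrableOn_Icc
  have cI : ContinuousOn (fun s => ∫ τ in (0:ℝ)..s, ℓ τ) (Set.Icc 0 t) := by
    have := intervalIntegral.continuousOn_primitive_interval
      (a := 0) (b := t) (f := ℓ) (μ := volume)
      (by rwa [Set.uIcc_of_le ht.le])
    rwa [Set.uIcc_of_le ht.le] at this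
  have cG : ContinuousOn G (Set.Icc 0 t) := cF.sub cI
  -- derivative bound on the interior
  have hG' : ∀ s ∈ Set.Ioo (0:ℝ) t, ∃ c, HasDerivAt G c s ∧ c ≤ 0 := by
    intro s hs
    have hsI : s ∈ Set.Icc (0:ℝ) t := Set.mem_Icc_of_Ioo hs
    set Dp : (Fin N → ℝ) → ℝ := fun x => (1 / h) * ∑ y ∈ Ωh,
      (v s y x * kernel h Ωh ν Φp Φm y x * p s y
        - v s x y * kernel h Ωh ν Φp Φm x y * p s x) with hDp
    have du : ∀ x ∈ Ωh, HasDerivAt (fun s' => u x (t - s'))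
        (discHam h Ωh ν Φp Φm (fun y => u y (t - s)) x * (-1)) s := by
      intro x hx
      have hts : 0 < t - s := sub_pos.2 hs.2
      have h1 : HasDerivAt (fun τ => u x τ)
          (discHam h Ωh ν Φp Φm (fun y => u y (t - s)) x) (t - s) :=
        (huD x hx (t - s) (Set.mem_Ici.2 hts.le)).hasDerivAt (Ici_mem_nhds hts)
      have h2 : HasDerivAt (fun s' : ℝ => t - s') (-1) s := by
        simpa using (hasDerivAt_id s).const_sub t
      exact h1.comp s h2
    have dp' : ∀ x ∈ Ωh, HasDerivAt (fun τ => p τ x) (Dp x) s :=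
      fun x hx => (hpD x hx s hsI).hasDerivAt (Icc_mem_nhds hs.1 hs.2)
    have dF : HasDerivAt F (∑ x ∈ Ωh,
        (discHam h Ωh ν Φp Φm (fun y => u y (t - s)) x * (-1) * p s x
          + u x (t - s) * Dp x)) s :=
      by
        have := HasDerivAt.sum fun x hx => (du x hx).mul (dp' x hx)
        have hFeq : F = ∑ i ∈ Ωh, ((fun s' => u i (t - s')) * fun τ => p τ i) := by
          ext s'
          simp [hFdef, Finset.sum_apply, Pi.mul_apply]
        rw [hFeq]
        exact this
    have dI : HasDerivAt (fun s' => ∫ τ in (0:ℝ)..s', ℓ τ) (ℓ s) s := by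
      apply intervalIntegral.integral_hasDerivAt_right
      · apply IntegrableOn.intervalIntegrable
        apply hInt.mono_set
        rw [Set.uIcc_of_le hs.1.le]
        exact Set.Icc_subset_Icc le_rfl hs.2.le
      · exact ContinuousOn.stronglyMeasurableAtFilter isOpen_Ioo
          (cℓ.mono Set.Ioo_subset_Icc_self) s hs
      · exact (cℓ s hsI).continuousAt (Icc_mem_nhds hs.1 hs.2)
    refine ⟨_, dF.sub dI, ?_⟩
    -- the algebraic rearrangement of the transport term
    have halg : ∑ x ∈ Ωh, u x (t - s) * Dp x
        = ∑ x ∈ Ωh, p s x * ∑ y ∈ Ωh,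
            v s x y * kernel h Ωh ν Φp Φm x y
              * ((u y (t - s) - u x (t - s)) / h) := by
      calc ∑ x ∈ Ωh, u x (t - s) * Dp x
          = ∑ x ∈ Ωh, ∑ y ∈ Ωh,
              (u x (t - s) * ((1 / h) * (v s y x * kernel h Ωh ν Φp Φm y x * p s y))
                - u x (t - s) * ((1 / h) * (v s x y * kernel h Ωh ν Φp Φm x y * p s x))) := by
            refine Finset.sum_congr rfl fun x _ => ?_
            simp only [hDp, Finset.mul_sum]
            refine Finset.sum_congr rfl fun y _ => by ring
        _ = (∑ x ∈ Ωh, ∑ y ∈ Ωh,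
              u x (t - s) * ((1 / h) * (v s y x * kernel h Ωh ν Φp Φm y x * p s y)))
            - ∑ x ∈ Ωh, ∑ y ∈ Ωh,
              u x (t - s) * ((1 / h) * (v s x y * kernel h Ωh ν Φp Φm x y * p s x)) := by
            simp [Finset.sum_sub_distrib]
        _ = (∑ x ∈ Ωh, ∑ y ∈ Ωh,
              u y (t - s) * ((1 / h) * (v s x y * kernel h Ωh ν Φp Φm x y * p s x)))
            - ∑ x ∈ Ωh, ∑ y ∈ Ωh,
              u x (t - s) * ((1 / h) * (v s x y * kernel h Ωh ν Φp Φm x y * p s x)) := by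
            rw [Finset.sum_comm]
        _ = ∑ x ∈ Ωh, p s x * ∑ y ∈ Ωh,
              v s x y * kernel h Ωh ν Φp Φm x y
                * ((u y (t - s) - u x (t - s)) / h) := by
            rw [← Finset.sum_sub_distrib]
            refine Finset.sum_congr rfl fun x _ => ?_
            rw [← Finset.sum_sub_distrib, Finset.mul_sum]
            refine Finset.sum_congr rfl fun y _ => ?_
            ring
    have hxle : ∀ x ∈ Ωh,
        p s x * ∑ y ∈ Ωh, v s x y * kernel h Ωh ν Φp Φm x y
            * ((u y (t - s) - u x (t - s)) / h)
          ≤ p s x * (discHam h Ωh ν Φp Φm (fun y => u y (t - s)) x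
              + discLag h Ωh ν Φp Φm x (v s)) := by
      intro x hx
      refine mul_le_mul_of_nonneg_left ?_ (hpn s hsI x)
      exact key_ineq hhne Ωh hsep hν0 x hx (hΦp' x hx) (hΦm' x hx) (v s)
        (fun y hy => hvn s hsI x y hy) (fun y => u y (t - s))
    have hsum_le : ∑ x ∈ Ωh,
        (discHam h Ωh ν Φp Φm (fun y => u y (t - s)) x * (-1) * p s x
          + u x (t - s) * Dp x) ≤ ℓ s := by
      rw [Finset.sum_add_distrib, halg]
      have step := Finset.sum_le_sum hxle
      calc (∑ x ∈ Ωh, discHam h Ωh ν Φp Φm (fun y => u y (t - s)) x * (-1) * p s x)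
            + ∑ x ∈ Ωh, p s x * ∑ y ∈ Ωh, v s x y * kernel h Ωh ν Φp Φm x y
                * ((u y (t - s) - u x (t - s)) / h)
          ≤ (∑ x ∈ Ωh, discHam h Ωh ν Φp Φm (fun y => u y (t - s)) x * (-1) * p s x)
            + ∑ x ∈ Ωh, p s x * (discHam h Ωh ν Φp Φm (fun y => u y (t - s)) x
                + discLag h Ωh ν Φp Φm x (v s)) := by
            exact add_le_add (le_refl _) step
        _ = ℓ s := by
            rw [hℓdef, ← Finset.sum_add_distrib]
            refine Finset.sum_congr rfl fun x _ => ?_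
            ring
    linarith
  -- antitonicity of G
  have hAnti : AntitoneOn G (Set.Icc 0 t) := by
    apply antitoneOn_of_deriv_nonpos (convex_Icc 0 t) cG
    · intro s hs
      rw [interior_Icc] at hs
      obtain ⟨c, hc, -⟩ := hG' s hs
      exact hc.differentiableAt.differentiableWithinAt
    · intro s hs
      rw [interior_Icc] at hs
      obtain ⟨c, hc, hc0⟩ := hG' s hs
      rw [hc.deriv]; exact hc0
  have hGle : G t ≤ G 0 :=
    hAnti (Set.left_mem_Icc.2 ht.le) (Set.right_mem_Icc.2 ht.le) ht.le
  have hG0 : G 0 = u xl t := by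
    simp only [hGdef, hFdef, intervalIntegral.integral_same, sub_zero]
    calc ∑ x ∈ Ωh, u x t * p 0 x
        = ∑ x ∈ Ωh, (if x = xl then u x t else 0) := by
          refine Finset.sum_congr rfl fun x _ => ?_
          rw [hp0 x]
          split <;> simp
      _ = u xl t := by rw [Finset.sum_ite_eq' Ωh xl fun x => u x t, if_pos hxl]
  have hGt : G t = (∑ x ∈ Ωh, f x * p t x) - ∫ τ in (0:ℝ)..t, ℓ τ := by
    have hF : F t = ∑ x ∈ Ωh, f x * p t x := by
      simp only [hFdef]
      refine Finset.sum_congr rfl fun x hx => ?_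
      rw [sub_self, hu0 x hx]
    simp only [hGdef, hF]
  rw [hG0, hGt] at hGle
  exact hGle
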